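/- arXiv:1504.01143 — 4 statements merged into one kernel-verified Lean document; each statement's English description precedes it below -/
import Mathlib

section
/- If W is a double occurrence word and W' is obtained from W by reversing the subword strictly between the two occurrences of a letter v, then the interlacement graph of W' equals the local complement of the interlacement graph of W at v. Consequently, if G is a circle graph then so is G^v. -/
open SimpleGraph

/-- Two letters are interlaced in a word if their occurrences alternate. -/
def Interlaced {α : Type} [DecidableEq α] (W : List α) (a b : α) : Prop :=
  W.filter (fun x => x == a || x == b) = [a, b, a, b] ∨
  W.filter (fun x => x == a || x == b) = [b, a, b, a]

/-- The interlacement graph of a word. -/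
def interlacementGraph {α : Type} [DecidableEq α] (W : List α) : SimpleGraph α where
  Adj a b := a ≠ b ∧ (Interlaced W a b ∨ Interlaced W b a)
  symm := ⟨fun a b h => ⟨h.1.symm, h.2.symm⟩⟩
  loopless := ⟨fun a h => h.1 rfl⟩

/-- A double occurrence word: each letter of the alphabet occurs exactly twice. -/
def IsDOW {α : Type} [DecidableEq α] (W : List α) : Prop := ∀ a : α, W.count a = 2

/-- A circle graph: a graph isomorphic to the interlacement graph of a
double occurrence word. -/
def IsCircleGraph {V : Type} (G : SimpleGraph V) : Prop :=
  ∃ (n : ℕ) (W : List (Fin n)), IsDOW W ∧ Nonempty (G ≃g interlacementGraph W)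

/-- Local complementation at a vertex `v`: toggle adjacency inside `N(v)`. -/
def localComplement {V : Type} (G : SimpleGraph V) (v : V) : SimpleGraph V where
  Adj x y := x ≠ y ∧ ((G.Adj v x ∧ G.Adj v y ∧ ¬ G.Adj x y) ∨
    (¬ (G.Adj v x ∧ G.Adj v y) ∧ G.Adj x y))
  symm := by
    constructor
    rintro x y ⟨hxy, h | h⟩
    · exact ⟨hxy.symm, Or.inl ⟨h.2.1, h.1, fun hc => h.2.2 hc.symm⟩⟩
    · exact ⟨hxy.symm, Or.inr ⟨fun hc => h.1 ⟨hc.2, hc.1⟩, h.2.symm⟩⟩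
  loopless := ⟨fun x h => h.1 rfl⟩

/-- A split `(V1, X1; V2, X2)` of a graph. -/
def IsSplit {V : Type} (G : SimpleGraph V) (V1 X1 V2 X2 : Set V) : Prop :=
  V1 ∪ V2 = Set.univ ∧ Disjoint V1 V2 ∧ 2 ≤ V1.encard ∧ 2 ≤ V2.encard ∧
  X1 ⊆ V1 ∧ X2 ⊆ V2 ∧ ∀ x ∈ V1, ∀ y ∈ V2, (G.Adj x y ↔ x ∈ X1 ∧ y ∈ X2)

/-- A graph has a split. -/
def HasSplit {V : Type} (G : SimpleGraph V) : Prop :=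
  ∃ V1 X1 V2 X2, IsSplit G V1 X1 V2 X2

/-- Twin vertices: same neighbours outside `{u, v}`. -/
def IsTwinPair {V : Type} (G : SimpleGraph V) (u v : V) : Prop :=
  u ≠ v ∧ G.neighborSet u \ {v} = G.neighborSet v \ {u}

/-- Adjacent twins. -/
def AdjacentTwins {V : Type} (G : SimpleGraph V) (u v : V) : Prop :=
  G.Adj u v ∧ G.neighborSet u \ {v} = G.neighborSet v \ {u}

/-- Nonadjacent twins. -/
def NonadjacentTwins {V : Type} (G : SimpleGraph V) (u v : V) : Prop :=
  u ≠ v ∧ ¬ G.Adj u v ∧ G.neighborSet u = G.neighborSet v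

/-- Delete a vertex: keep the vertex set, remove all edges at `v`. -/
def deleteVertex {V : Type} (G : SimpleGraph V) (v : V) : SimpleGraph V where
  Adj x y := G.Adj x y ∧ x ≠ v ∧ y ≠ v
  symm := ⟨fun x y h => ⟨h.1.symm, h.2.2, h.2.1⟩⟩
  loopless := ⟨fun x h => G.loopless.irrefl x h.1⟩

/-- `v` is a cutpoint of the connected graph `G`. -/
def IsCutpoint {V : Type} (G : SimpleGraph V) (v : V) : Prop :=
  G.Connected ∧ ∃ x y : V, x ≠ v ∧ y ≠ v ∧ ¬ (deleteVertex G v).Reachable x y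

/-- Cyclic equivalence of words: generated by rotations and reversals. -/
inductive CyclicEquiv {β : Type} : List β → List β → Prop
  | refl (l : List β) : CyclicEquiv l l
  | rot (l₁ l₂ : List β) : CyclicEquiv (l₁ ++ l₂) (l₂ ++ l₁)
  | rev (l : List β) : CyclicEquiv l l.reverse
  | symm {l₁ l₂ : List β} : CyclicEquiv l₁ l₂ → CyclicEquiv l₂ l₁
  | trans {l₁ l₂ l₃ : List β} : CyclicEquiv l₁ l₂ → CyclicEquiv l₂ l₃ → CyclicEquiv l₁ l₃

/-- `G` is 3-connected: more than 3 vertices, and removing fewer than 3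
vertices leaves it connected. -/
def ThreeConnected {V : Type} [Fintype V] (G : SimpleGraph V) : Prop :=
  3 < Fintype.card V ∧ ∀ K : Set V, K.ncard < 3 → (G.induce (Kᶜ : Set V)).Connected

/-- The disjoint union of two graphs, joined by a single edge from `a` to `b`. -/
def joinedByEdge {V₁ V₂ : Type} (G₁ : SimpleGraph V₁) (G₂ : SimpleGraph V₂)
    (a : V₁) (b : V₂) : SimpleGraph (V₁ ⊕ V₂) where
  Adj x y :=
    Sum.elim (fun u => Sum.elim (fun w => G₁.Adj u w) (fun w => u = a ∧ w = b) y)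
             (fun u => Sum.elim (fun w => u = b ∧ w = a) (fun w => G₂.Adj u w) y) x
  symm := by
    constructor
    rintro (u | u) (w | w) h
    · exact h.symm
    · exact ⟨h.2, h.1⟩
    · exact ⟨h.2, h.1⟩
    · exact h.symm
  loopless := by
    constructor
    rintro (u | u) h
    · exact G₁.loopless.irrefl u h
    · exact G₂.loopless.irrefl u h


section Aux

variable {α : Type} [DecidableEq α]

lemma ig_adj (W : List α) (a b : α) :
    (interlacementGraph W).Adj a b ↔ a ≠ b ∧ (Interlaced W a b ∨ Interlaced W b a) :=
  Iff.rfl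

lemma lc_adj {V : Type} (G : SimpleGraph V) (v x y : V) :
    (localComplement G v).Adj x y ↔ x ≠ y ∧ ((G.Adj v x ∧ G.Adj v y ∧ ¬ G.Adj x y) ∨
      (¬ (G.Adj v x ∧ G.Adj v y) ∧ G.Adj x y)) :=
  Iff.rfl

lemma count_tf (l : List Bool) : l.count true + l.count false = l.length := by
  induction l with
  | nil => simp
  | cons a t ih => cases a <;> simp [List.count_cons] <;> omega

lemma boolKey (lA lB lC : List Bool)
    (h1 : (lA ++ lB ++ lC).count true = 2) (h2 : (lA ++ lB ++ lC).count false = 2) :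
    ((lA ++ lB.reverse ++ lC = [true, false, true, false] ∨
      lA ++ lB.reverse ++ lC = [false, true, false, true])
      ↔ ((lB.count true = 1 ∧ lB.count false = 1) ↔
        ¬ (lA ++ lB ++ lC = [true, false, true, false] ∨
          lA ++ lB ++ lC = [false, true, false, true]))) := by
  have hlen : (lA ++ lB ++ lC).length = 4 := by
    have := count_tf (lA ++ lB ++ lC); omega
  rcases lA with _|⟨a1,_|⟨a2,_|⟨a3,_|⟨a4,_|⟨a5,lA⟩⟩⟩⟩⟩ <;>
  rcases lB with _|⟨b1,_|⟨b2,_|⟨b3,_|⟨b4,_|⟨b5,lB⟩⟩⟩⟩⟩ <;>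
  rcases lC with _|⟨c1,_|⟨c2,_|⟨c3,_|⟨c4,_|⟨c5,lC⟩⟩⟩⟩⟩ <;>
  first
  | (exfalso; simp only [List.length_append, List.length_cons, List.length_nil] at hlen; omega)
  | skip
  all_goals try cases a1
  all_goals try cases a2
  all_goals try cases a3
  all_goals try cases a4
  all_goals try cases b1
  all_goals try cases b2
  all_goals try cases b3
  all_goals try cases b4
  all_goals try cases c1
  all_goals try cases c2
  all_goals try cases c3
  all_goals try cases c4
  all_goals revert h1 h2
  all_goals decide

lemma filter_nov (X : List α) (v a : α) (h : X.count v = 0) :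
    X.filter (fun z => z == v || z == a) = List.replicate (X.count a) a := by
  rw [show X.filter (fun z => z == v || z == a) = X.filter (fun z => z == a) from
    List.filter_congr fun x hx => by
      have hxv : x ≠ v := fun hc => by
        rw [List.count_eq_zero] at h; exact h (hc ▸ hx)
      simp [hxv]]
  exact List.filter_beq a

lemma interlaced_v (A B C : List α) (v a : α) (hva : a ≠ v)
    (hA : A.count v = 0) (hB : B.count v = 0) (hC : C.count v = 0)
    (h2 : A.count a + B.count a + C.count a = 2) :
    (Interlaced (A ++ v :: (B ++ v :: C)) v a ∨ Interlaced (A ++ v :: (B ++ v :: C)) a v)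
      ↔ B.count a = 1 := by
  have hpq : (A ++ v :: (B ++ v :: C)).filter (fun z => z == a || z == v)
      = (A ++ v :: (B ++ v :: C)).filter (fun z => z == v || z == a) :=
    List.filter_congr fun z _ => Bool.or_comm _ _
  have hq1 : (A ++ v :: (B ++ v :: C)).filter (fun z => z == v || z == a)
      = List.replicate (A.count a) a ++
          v :: (List.replicate (B.count a) a ++ v :: List.replicate (C.count a) a) := by
    simp [List.filter_append, List.filter_cons, filter_nov A v a hA, filter_nov B v a hB,
      filter_nov C v a hC]
  unfold Interlaced
  rw [hpq, hq1]
  set na := A.count a with hna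
  set nb := B.count a with hnb
  set nc := C.count a with hnc
  clear_value na nb nc
  have ha2 : na ≤ 2 := by omega
  have hb2 : nb ≤ 2 := by omega
  have hc2 : nc ≤ 2 := by omega
  clear hpq hq1 hA hB hC hna hnb hnc
  interval_cases na <;> interval_cases nb <;> interval_cases nc <;>
    simp_all [List.replicate, hva, Ne.symm hva]

lemma map_eq_iff (x y : α) (hxy : x ≠ y) (l : List α) (hl : ∀ z ∈ l, z = x ∨ z = y)
    (pat : List Bool) :
    l.map (· == x) = pat ↔ l = pat.map (fun t => if t then x else y) := by
  induction l generalizing pat with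
  | nil => cases pat <;> simp
  | cons a t ih =>
    cases pat with
    | nil => simp
    | cons b pb =>
      have ha := hl a List.mem_cons_self
      have ht : ∀ z ∈ t, z = x ∨ z = y := fun z hz => hl z (List.mem_cons_of_mem a hz)
      rcases ha with rfl | rfl <;> cases b <;>
        simp [ih ht, hxy, Ne.symm hxy]

lemma count_true_map (x : α) (l : List α) :
    (l.map (· == x)).count true = l.count x := by
  simp only [List.count, List.countP_map]
  congr 1
  funext z
  simp [Function.comp]

lemma count_false_map (x y : α) (hxy : x ≠ y) (l : List α) (hl : ∀ z ∈ l, z = x ∨ z = y) :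
    (l.map (· == x)).count false = l.count y := by
  simp only [List.count, List.countP_map]
  apply List.countP_congr
  intro z hz
  rcases hl z hz with rfl | rfl <;> simp [hxy, Ne.symm hxy]

lemma lc_word (A B C : List α) (v : α)
    (hW : IsDOW (A ++ v :: (B ++ v :: C))) :
    interlacementGraph (A ++ v :: (B.reverse ++ v :: C)) =
      localComplement (interlacementGraph (A ++ v :: (B ++ v :: C))) v := by
  have hcnt : ∀ z, A.count z + B.count z + C.count z + (if v = z then 2 else 0) = 2 := by
    intro z
    have := hW z
    simp only [IsDOW, List.count_append, List.count_cons] at this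
    split <;> rename_i h <;> simp [h] at this <;> omega
  have hAv : A.count v = 0 := by have := hcnt v; simp at this; omega
  have hBv : B.count v = 0 := by have := hcnt v; simp at this; omega
  have hCv : C.count v = 0 := by have := hcnt v; simp at this; omega
  have h2 : ∀ z, z ≠ v → A.count z + B.count z + C.count z = 2 := by
    intro z hz; have := hcnt z; rw [if_neg (Ne.symm hz)] at this; omega
  have hBrv : B.reverse.count v = 0 := by rw [List.count_reverse]; exact hBv
  have adjv : ∀ a, a ≠ v →
      ((interlacementGraph (A ++ v :: (B ++ v :: C))).Adj v a ↔ B.count a = 1) := by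
    intro a ha
    rw [ig_adj]
    rw [interlaced_v A B C v a ha hAv hBv hCv (h2 a ha)]
    simp [Ne.symm ha]
  have adjv' : ∀ a, a ≠ v →
      ((interlacementGraph (A ++ v :: (B.reverse ++ v :: C))).Adj v a ↔ B.count a = 1) := by
    intro a ha
    rw [ig_adj]
    rw [interlaced_v A B.reverse C v a ha hAv hBrv hCv
      (by rw [List.count_reverse]; exact h2 a ha)]
    simp [Ne.symm ha, List.count_reverse]
  have vcase : ∀ z, z ≠ v →
      ((interlacementGraph (A ++ v :: (B.reverse ++ v :: C))).Adj v z ↔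
        (localComplement (interlacementGraph (A ++ v :: (B ++ v :: C))) v).Adj v z) := by
    intro z hz
    rw [adjv' z hz, lc_adj]
    constructor
    · intro h
      exact ⟨Ne.symm hz, Or.inr ⟨fun hc => (SimpleGraph.irrefl _) hc.1, (adjv z hz).mpr h⟩⟩
    · rintro ⟨-, h | h⟩
      · exact absurd h.1 (SimpleGraph.irrefl _)
      · exact (adjv z hz).mp h.2
  ext x y
  by_cases hx : x = v
  · rw [hx]
    by_cases hy : y = v
    · rw [hy]
      simp [ig_adj, lc_adj]
    · exact vcase y hy
  · by_cases hy : y = v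
    · rw [hy,
        SimpleGraph.adj_comm (interlacementGraph (A ++ v :: (B.reverse ++ v :: C))) x v,
        SimpleGraph.adj_comm
          (localComplement (interlacementGraph (A ++ v :: (B ++ v :: C))) v) x v]
      exact vcase x hx
    · -- main case : x ≠ v, y ≠ v
      by_cases hxy : x = y
      · rw [hxy]
        simp [ig_adj, lc_adj]
      · set p : α → Bool := fun z => z == x || z == y with hp
        have hpv : p v = false := by
          simp only [hp, Bool.or_eq_false_iff, beq_eq_false_iff_ne]
          exact ⟨fun h => hx h.symm, fun h => hy h.symm⟩
        have hpx : p x = true := by simp [hp]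
        have hpy : p y = true := by simp [hp]
        have hfilt : ∀ (B' : List α),
            (A ++ v :: (B' ++ v :: C)).filter p =
              A.filter p ++ (B'.filter p ++ C.filter p) := by
          intro B'
          simp [List.filter_append, List.filter_cons, hpv]
        have hmem : ∀ (l : List α), ∀ z ∈ l.filter p, z = x ∨ z = y := by
          intro l z hz
          rw [List.mem_filter] at hz
          have := hz.2
          simp only [hp, Bool.or_eq_true, beq_iff_eq] at this
          exact this
        set m : α → Bool := fun z => z == x with hm
        set LA := (A.filter p).map m with hLA
        set LB := (B.filter p).map m with hLB
        set LC := (C.filter p).map m with hLC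
        have hBrev : (B.reverse.filter p).map m = LB.reverse := by
          rw [List.filter_reverse, List.map_reverse, hLB]
        have key : ∀ (B' : List α) (LB' : List Bool), (B'.filter p).map m = LB' →
            ((Interlaced (A ++ v :: (B' ++ v :: C)) x y ∨
              Interlaced (A ++ v :: (B' ++ v :: C)) y x) ↔
              (LA ++ LB' ++ LC = [true, false, true, false] ∨
               LA ++ LB' ++ LC = [false, true, false, true])) := by
          intro B' LB' hLB'
          have hmm : ∀ z ∈ (A.filter p ++ (B'.filter p ++ C.filter p)), z = x ∨ z = y := by
            intro z hz
            simp only [List.mem_append] at hz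
            rcases hz with h | h | h
            exacts [hmem A z h, hmem B' z h, hmem C z h]
          have hfq : (A ++ v :: (B' ++ v :: C)).filter (fun z => z == y || z == x) =
              (A ++ v :: (B' ++ v :: C)).filter p :=
            List.filter_congr fun z _ => Bool.or_comm _ _
          have hmapeq : (A.filter p ++ (B'.filter p ++ C.filter p)).map m =
              LA ++ LB' ++ LC := by
            simp only [List.map_append, hLA, hLB', hLC, List.append_assoc]
          have e1 : (A.filter p ++ (B'.filter p ++ C.filter p)) = [x, y, x, y] ↔
              LA ++ LB' ++ LC = [true, false, true, false] := by
            rw [← hmapeq, hm, map_eq_iff x y hxy _ hmm]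
            simp
          have e2 : (A.filter p ++ (B'.filter p ++ C.filter p)) = [y, x, y, x] ↔
              LA ++ LB' ++ LC = [false, true, false, true] := by
            rw [← hmapeq, hm, map_eq_iff x y hxy _ hmm]
            simp [Ne.symm hxy]
          unfold Interlaced
          rw [hfq, hfilt B', e1, e2]
          tauto
        have hcx : LB.count true = B.count x := by
          rw [hLB, hm, count_true_map, List.count_filter hpx]
        have hcy : LB.count false = B.count y := by
          rw [hLB, hm, count_false_map x y hxy _ (hmem B), List.count_filter hpy]
        have hct : (LA ++ LB ++ LC).count true = 2 := by
          have hh : ∀ l : List α, ((l.filter p).map m).count true = l.count x := by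
            intro l; rw [hm, count_true_map, List.count_filter hpx]
          simp only [List.count_append, hLA, hLB, hLC, hh]
          exact h2 x hx
        have hcf : (LA ++ LB ++ LC).count false = 2 := by
          have hh : ∀ l : List α, ((l.filter p).map m).count false = l.count y := by
            intro l; rw [hm, count_false_map x y hxy _ (hmem l), List.count_filter hpy]
          simp only [List.count_append, hLA, hLB, hLC, hh]
          exact h2 y hy
        have bk := boolKey LA LB LC hct hcf
        have k1 := key B LB rfl
        have k2 := key B.reverse LB.reverse hBrev
        rw [ig_adj, lc_adj, adjv x hx, adjv y hy, ig_adj, k2, bk]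
        constructor
        · rintro ⟨-, h⟩
          refine ⟨hxy, ?_⟩
          by_cases htog : LB.count true = 1 ∧ LB.count false = 1
          · left
            refine ⟨hcx ▸ htog.1, hcy ▸ htog.2, ?_⟩
            intro hc
            exact (h.mp htog) (k1.mp hc.2)
          · right
            refine ⟨fun hc => htog ⟨hcx.symm ▸ hc.1, hcy.symm ▸ hc.2⟩, hxy, k1.mpr ?_⟩
            by_contra hni
            exact htog (h.mpr hni)
        · rintro ⟨-, (⟨hax, hay, hni⟩ | ⟨hna, had⟩)⟩
          · refine ⟨hxy, ?_⟩
            constructor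
            · intro _ hc
              exact hni ⟨hxy, k1.mpr hc⟩
            · intro _
              exact ⟨hcx ▸ hax, hcy ▸ hay⟩
          · refine ⟨hxy, ?_⟩
            constructor
            · intro htog
              exact absurd ⟨hcx.symm ▸ htog.1, hcy.symm ▸ htog.2⟩ hna
            · intro hni
              exact absurd (k1.mp had.2) hni

lemma decomp (W : List α) (v : α) (h : W.count v = 2) :
    ∃ A B C, W = A ++ v :: (B ++ v :: C) := by
  have hv : v ∈ W := List.count_pos_iff.mp (by omega)
  obtain ⟨A, t, rfl⟩ := List.append_of_mem hv
  have hc : A.count v + t.count v = 1 := by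
    simp [List.count_append, List.count_cons] at h; omega
  by_cases ht : t.count v = 1
  · have hvt : v ∈ t := List.count_pos_iff.mp (by omega)
    obtain ⟨B, C, rfl⟩ := List.append_of_mem hvt
    exact ⟨A, B, C, rfl⟩
  · have hA : A.count v = 1 := by omega
    have hvA : v ∈ A := List.count_pos_iff.mp (by omega)
    obtain ⟨A1, A2, rfl⟩ := List.append_of_mem hvA
    exact ⟨A1, A2, t, by simp⟩

def lc_iso {V W : Type} {G : SimpleGraph V} {H : SimpleGraph W} (e : G ≃g H) (u : V) :
    localComplement G u ≃g localComplement H (e u) where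
  toEquiv := e.toEquiv
  map_rel_iff' := by
    intro a b
    simp only [lc_adj, RelIso.coe_fn_toEquiv, ne_eq, EmbeddingLike.apply_eq_iff_eq,
      SimpleGraph.Iso.map_adj_iff]

lemma circle_lc {V : Type} (G : SimpleGraph V) (u : V)
    (h : IsCircleGraph G) : IsCircleGraph (localComplement G u) := by
  obtain ⟨n, W, hdow, ⟨e⟩⟩ := h
  obtain ⟨v, hv⟩ : ∃ v, e u = v := ⟨e u, rfl⟩
  obtain ⟨A, B, C, hWeq⟩ := decomp W v (hdow v)
  have hdow' : IsDOW (A ++ v :: (B ++ v :: C)) := hWeq ▸ hdow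
  refine ⟨n, A ++ v :: (B.reverse ++ v :: C), ?_, ?_⟩
  · intro z
    have := hdow' z
    simp only [List.count_append, List.count_cons, List.count_reverse] at this ⊢
    omega
  · rw [lc_word A B C v hdow', ← hWeq, ← hv]
    exact ⟨lc_iso e u⟩

end Aux

/-- Reversing the subword strictly between the two occurrences of `v` realizes
local complementation at `v`; consequently circle graphs are closed under
local complementation. -/
theorem stmt1 {α : Type} [DecidableEq α] (A B C : List α) (v : α)
    (hW : IsDOW (A ++ v :: (B ++ v :: C))) :
    interlacementGraph (A ++ v :: (B.reverse ++ v :: C)) =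
      localComplement (interlacementGraph (A ++ v :: (B ++ v :: C))) v ∧
    ∀ {V : Type} (G : SimpleGraph V) (u : V),
      IsCircleGraph G → IsCircleGraph (localComplement G u) :=
  ⟨lc_word A B C v hW, fun G u h => circle_lc G u h⟩
end

section
/- If a simple graph G with at least 4 vertices has a cutpoint v, and H is a union of some but not all connected components of G - v with |V(H)| ≥ 2, then G has a split with V1 = V(H) and X2 = {v}. -/
open SimpleGraph

/-- A union `S` of some but not all connected components of `G - v`, where `v`
is a cutpoint, gives a split with `V1 = S` and `X2 = {v}`. -/
theorem stmt7 {V : Type} [Fintype V] (G : SimpleGraph V) (h4 : 4 ≤ Fintype.card V)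
    (v : V) (hv : IsCutpoint G v) (S : Set V)
    (hvS : v ∉ S)
    (hclosed : ∀ x ∈ S, ∀ y : V, (deleteVertex G v).Reachable x y → y ∈ S)
    (hne : S.Nonempty)
    (hnall : ∃ y : V, y ≠ v ∧ y ∉ S)
    (hcard : 2 ≤ S.encard) :
    ∃ X₁ : Set V, IsSplit G S X₁ Sᶜ {v} := by
  refine ⟨{x | x ∈ S ∧ G.Adj x v}, ?_, ?_, hcard, ?_, fun x hx => hx.1, ?_, ?_⟩
  · simp
  · exact disjoint_compl_right
  · obtain ⟨y, hy, hyS⟩ := hnall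
    have : ({v, y} : Set V) ⊆ Sᶜ := by
      rintro z (rfl | rfl)
      · exact hvS
      · exact hyS
    calc (2 : ℕ∞) = ({v, y} : Set V).encard := (Set.encard_pair (Ne.symm hy)).symm
      _ ≤ Sᶜ.encard := Set.encard_mono this
  · intro z hz; exact hz ▸ hvS
  · intro x hx y hy
    constructor
    · intro hadj
      rcases eq_or_ne y v with rfl | hyv
      · exact ⟨⟨hx, hadj⟩, rfl⟩
      · exfalso
        have hxv : x ≠ v := fun h => hvS (h ▸ hx)
        have : (deleteVertex G v).Reachable x y :=
          SimpleGraph.Adj.reachable ⟨hadj, hxv, hyv⟩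
        exact hy (hclosed x hx y this)
    · rintro ⟨⟨_, hadj⟩, rfl⟩
      exact hadj
end

section
/- In a 3-regular simple graph, if two pairs of adjacent twin vertices intersect (share a common vertex), then the three twin vertices together with their shared neighbor induce a 4-clique which forms an entire connected component of the graph. -/
open SimpleGraph

lemma nbhd_eq3 {V : Type} [Fintype V] [DecidableEq V] (G : SimpleGraph V) [DecidableRel G.Adj]
    (p a b c : V) (hdeg : G.degree p = 3) (hab : a ≠ b) (hac : a ≠ c) (hbc : b ≠ c)
    (ha : G.Adj p a) (hb : G.Adj p b) (hc : G.Adj p c) :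
    G.neighborFinset p = {a, b, c} := by
  have hsub : ({a, b, c} : Finset V) ⊆ G.neighborFinset p := by
    intro z hz
    simp only [Finset.mem_insert, Finset.mem_singleton] at hz
    rcases hz with rfl | rfl | rfl <;> simpa [SimpleGraph.mem_neighborFinset] using ‹_›
  have hcard : ({a, b, c} : Finset V).card = 3 := by
    rw [Finset.card_insert_of_notMem (by simp [hab, hac]),
      Finset.card_insert_of_notMem (by simp [hbc]), Finset.card_singleton]
  have : (G.neighborFinset p).card ≤ ({a, b, c} : Finset V).card := by
    rw [hcard]
    exact le_of_eq hdeg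
  exact (Finset.eq_of_subset_of_card_le hsub this).symm


/-- In a cubic graph, two intersecting pairs of adjacent twins produce a
4-clique which is an entire connected component. -/
theorem stmt9 {V : Type} [Fintype V] (G : SimpleGraph V) [DecidableRel G.Adj]
    (hcubic : ∀ x : V, G.degree x = 3) (u v w : V) (huw : u ≠ w)
    (h1 : AdjacentTwins G u v) (h2 : AdjacentTwins G v w) :
    ∃ x : V, x ∉ ({u, v, w} : Set V) ∧ G.Adj u x ∧ G.Adj v x ∧ G.Adj w x ∧
      G.IsClique {u, v, w, x} ∧
      ∀ y ∈ ({u, v, w, x} : Set V), ∀ z : V, G.Adj y z → z ∈ ({u, v, w, x} : Set V) := by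
  classical
  obtain ⟨huv, htw1⟩ := h1
  obtain ⟨hvw, htw2⟩ := h2
  have hne_uv : u ≠ v := huv.ne
  have hne_vw : v ≠ w := hvw.ne
  -- membership characterizations
  have mem1 : ∀ z, G.Adj u z ∧ z ≠ v ↔ G.Adj v z ∧ z ≠ u := by
    intro z
    constructor
    · rintro ⟨h, hz⟩
      have : z ∈ G.neighborSet v \ {u} := htw1 ▸ (show z ∈ G.neighborSet u \ {v} from ⟨h, hz⟩)
      exact ⟨this.1, this.2⟩
    · rintro ⟨h, hz⟩
      have : z ∈ G.neighborSet u \ {v} := htw1.symm ▸ (show z ∈ G.neighborSet v \ {u} from ⟨h, hz⟩)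
      exact ⟨this.1, this.2⟩
  have mem2 : ∀ z, G.Adj v z ∧ z ≠ w ↔ G.Adj w z ∧ z ≠ v := by
    intro z
    constructor
    · rintro ⟨h, hz⟩
      have : z ∈ G.neighborSet w \ {v} := htw2 ▸ (show z ∈ G.neighborSet v \ {w} from ⟨h, hz⟩)
      exact ⟨this.1, this.2⟩
    · rintro ⟨h, hz⟩
      have : z ∈ G.neighborSet v \ {w} := htw2.symm ▸ (show z ∈ G.neighborSet w \ {v} from ⟨h, hz⟩)
      exact ⟨this.1, this.2⟩
  -- u adjacent to w
  have huw_adj : G.Adj u w := ((mem1 w).2 ⟨hvw, huw.symm⟩).1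
  -- get the fourth vertex x
  have hsub : ({v, w} : Finset V) ⊆ G.neighborFinset u := by
    intro z hz
    simp only [Finset.mem_insert, Finset.mem_singleton] at hz
    rcases hz with rfl | rfl <;> simp [SimpleGraph.mem_neighborFinset, huv, huw_adj]
  have hcard2 : ({v, w} : Finset V).card = 2 := by
    rw [Finset.card_insert_of_notMem (by simp [hne_vw]), Finset.card_singleton]
  have hss : ({v, w} : Finset V) ⊂ G.neighborFinset u := by
    refine hsub.ssubset_of_ne ?_
    intro h
    have hd := hcubic u
    rw [SimpleGraph.degree, ← h, hcard2] at hd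
    omega
  obtain ⟨x, hxmem, hxnot⟩ := Finset.exists_of_ssubset hss
  simp only [Finset.mem_insert, Finset.mem_singleton, not_or] at hxnot
  obtain ⟨hxv, hxw⟩ := hxnot
  have hux : G.Adj u x := (SimpleGraph.mem_neighborFinset G u x).1 hxmem
  have hxu : x ≠ u := fun h => G.loopless.irrefl u (h ▸ hux)
  have hvx : G.Adj v x := ((mem1 x).1 ⟨hux, hxv⟩).1
  have hwx : G.Adj w x := ((mem2 x).1 ⟨hvx, hxw⟩).1
  -- neighbor finsets
  have hNu : G.neighborFinset u = {v, w, x} :=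
    nbhd_eq3 G u v w x (hcubic u) hne_vw (Ne.symm hxv) (Ne.symm hxw) huv huw_adj hux
  have hNv : G.neighborFinset v = {u, w, x} :=
    nbhd_eq3 G v u w x (hcubic v) huw (Ne.symm hxu) (Ne.symm hxw) huv.symm hvw hvx
  have hNw : G.neighborFinset w = {u, v, x} :=
    nbhd_eq3 G w u v x (hcubic w) hne_uv (Ne.symm hxu) (Ne.symm hxv) huw_adj.symm hvw.symm hwx
  have hNx : G.neighborFinset x = {u, v, w} :=
    nbhd_eq3 G x u v w (hcubic x) hne_uv huw hne_vw hux.symm hvx.symm hwx.symm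
  refine ⟨x, ?_, hux, hvx, hwx, ?_, ?_⟩
  · simp only [Set.mem_insert_iff, Set.mem_singleton_iff, not_or]
    exact ⟨hxu, hxv, hxw⟩
  · intro a ha b hb hab
    simp only [Set.mem_insert_iff, Set.mem_singleton_iff] at ha hb
    rcases ha with rfl | rfl | rfl | rfl <;> rcases hb with rfl | rfl | rfl | rfl <;>
      first
        | exact absurd rfl hab
        | exact huv | exact huv.symm | exact huw_adj | exact huw_adj.symm
        | exact hvw | exact hvw.symm | exact hux | exact hux.symm
        | exact hvx | exact hvx.symm | exact hwx | exact hwx.symm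
  · intro y hy z hz
    simp only [Set.mem_insert_iff, Set.mem_singleton_iff] at hy ⊢
    have key : ∀ p : V, p ∈ ({u,v,w,x} : Set V) → G.neighborFinset p ⊆ {u, v, w, x} := by
      rintro p hp
      rcases hp with rfl | rfl | rfl | rfl
      · rw [hNu]; intro z hz; simp at hz ⊢; tauto
      · rw [hNv]; intro z hz; simp at hz ⊢; tauto
      · rw [hNw]; intro z hz; simp at hz ⊢; tauto
      · rw [hNx]; intro z hz; simp at hz ⊢; tauto
    have := key y (by simpa using hy) ((SimpleGraph.mem_neighborFinset G y z).2 hz)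
    simpa using this
end

section
/- If G is a 3-connected 3-regular simple graph containing two disjoint pairs of nonadjacent twins {v, v'} and {w, w'} such that v and w are adjacent, then G is isomorphic to K_{3,3}. -/
open SimpleGraph

lemma exists_third {α : Type*} [DecidableEq α] (s : Finset α) (h : s.card = 3)
    (a b : α) (ha : a ∈ s) (hb : b ∈ s) (hab : a ≠ b) :
    ∃ c, s = {a, b, c} ∧ c ≠ a ∧ c ≠ b := by
  have h1 : ((s.erase a).erase b).card = 1 := by
    rw [Finset.card_erase_of_mem (Finset.mem_erase.mpr ⟨hab.symm, hb⟩),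
      Finset.card_erase_of_mem ha, h]
  obtain ⟨c, hc⟩ := Finset.card_eq_one.mp h1
  have hcm : c ∈ (s.erase a).erase b := hc ▸ Finset.mem_singleton_self c
  have hcb : c ≠ b := (Finset.mem_erase.mp hcm).1
  have hca : c ≠ a := (Finset.mem_erase.mp (Finset.mem_erase.mp hcm).2).1
  have hcs : c ∈ s := Finset.mem_of_mem_erase (Finset.mem_of_mem_erase hcm)
  have hcard : ({a, b, c} : Finset α).card = 3 := by
    rw [Finset.card_insert_of_notMem (by simp [hab, hca.symm]),
      Finset.card_insert_of_notMem (by simp [hcb.symm]), Finset.card_singleton]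
  have hsub : ({a, b, c} : Finset α) ⊆ s := by
    intro x hx
    simp only [Finset.mem_insert, Finset.mem_singleton] at hx
    rcases hx with rfl | rfl | rfl <;> assumption
  exact ⟨c, (Finset.eq_of_subset_of_card_le hsub (by rw [h, hcard])).symm, hca, hcb⟩

lemma closed_walk {α : Type*} {G : SimpleGraph α} (A : Set α)
    (hA : ∀ ⦃a b⦄, a ∈ A → G.Adj a b → b ∈ A) {x y : α} (p : G.Walk x y) :
    x ∈ A → y ∈ A := by
  induction p with
  | nil => exact id
  | cons h _ ih => exact fun hx => ih (hA hx h)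


set_option maxHeartbeats 1000000 in
/-- A 3-connected cubic graph with two disjoint pairs of nonadjacent twins
`{v, v'}`, `{w, w'}` such that `v` and `w` are adjacent is `K_{3,3}`. -/
theorem stmt19 {V : Type} [Fintype V] (G : SimpleGraph V) [DecidableRel G.Adj]
    (h3c : ThreeConnected G) (hcubic : ∀ x : V, G.degree x = 3)
    (v v' w w' : V)
    (h1 : NonadjacentTwins G v v') (h2 : NonadjacentTwins G w w')
    (hdisj : ({v, v'} : Set V) ∩ {w, w'} = ∅)
    (hadj : G.Adj v w) :
    Nonempty (G ≃g completeBipartiteGraph (Fin 3) (Fin 3)) := by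
  classical
  obtain ⟨hvv', hnadj1, hN1⟩ := h1
  obtain ⟨hww', hnadj2, hN2⟩ := h2
  have hdne : ∀ a ∈ ({v, v'} : Set V), ∀ b ∈ ({w, w'} : Set V), a ≠ b := by
    intro a ha b hb h
    have : a ∈ ({v, v'} : Set V) ∩ {w, w'} := ⟨ha, h ▸ hb⟩
    rw [hdisj] at this
    exact this
  have hvw : v ≠ w := hdne v (by simp) w (by simp)
  have hvw'ne : v ≠ w' := hdne v (by simp) w' (by simp)
  have hv'w : v' ≠ w := hdne v' (by simp) w (by simp)
  have hv'w' : v' ≠ w' := hdne v' (by simp) w' (by simp)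
  have adjv' : ∀ z, G.Adj v z ↔ G.Adj v' z := by
    intro z; rw [← mem_neighborSet, ← mem_neighborSet, hN1]
  have adjw' : ∀ z, G.Adj w z ↔ G.Adj w' z := by
    intro z; rw [← mem_neighborSet, ← mem_neighborSet, hN2]
  have hvw'adj : G.Adj v w' := ((adjw' v).mp hadj.symm).symm
  have hdeg : ∀ x : V, (G.neighborFinset x).card = 3 := by
    intro x; rw [card_neighborFinset_eq_degree]; exact hcubic x
  obtain ⟨u, hNv, huw, huw'⟩ := exists_third (G.neighborFinset v) (hdeg v) w w'
    ((G.mem_neighborFinset v w).mpr hadj) ((G.mem_neighborFinset v w').mpr hvw'adj) hww'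
  have hAv : ∀ z, G.Adj v z ↔ z = w ∨ z = w' ∨ z = u := by
    intro z; rw [← mem_neighborFinset, hNv]; simp
  have hAv' : ∀ z, G.Adj v' z ↔ z = w ∨ z = w' ∨ z = u := fun z =>
    (adjv' z).symm.trans (hAv z)
  have hv'wadj : G.Adj w v' := ((adjv' w).mp hadj).symm
  obtain ⟨t, hNw, htv, htv'⟩ := exists_third (G.neighborFinset w) (hdeg w) v v'
    ((G.mem_neighborFinset w v).mpr hadj.symm) ((G.mem_neighborFinset w v').mpr hv'wadj) hvv'
  have hAw : ∀ z, G.Adj w z ↔ z = v ∨ z = v' ∨ z = t := by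
    intro z; rw [← mem_neighborFinset, hNw]; simp
  have hAw' : ∀ z, G.Adj w' z ↔ z = v ∨ z = v' ∨ z = t := fun z =>
    (adjw' z).symm.trans (hAw z)
  have havu : G.Adj v u := (hAv u).mpr (by simp)
  have hav'u : G.Adj v' u := (hAv' u).mpr (by simp)
  have hawt : G.Adj w t := (hAw t).mpr (by simp)
  have haw't : G.Adj w' t := (hAw' t).mpr (by simp)
  have huv : u ≠ v := (G.ne_of_adj havu).symm
  have huv' : u ≠ v' := (G.ne_of_adj hav'u).symm
  have htw : t ≠ w := (G.ne_of_adj hawt).symm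
  have htw' : t ≠ w' := (G.ne_of_adj haw't).symm
  have hut : u ≠ t := by
    rintro rfl
    have hsub : ({v, v', w, w'} : Finset V) ⊆ G.neighborFinset u := by
      simp only [Finset.insert_subset_iff, Finset.singleton_subset_iff, mem_neighborFinset]
      exact ⟨havu.symm, hav'u.symm, hawt.symm, haw't.symm⟩
    have hc4 : ({v, v', w, w'} : Finset V).card = 4 := by
      rw [Finset.card_insert_of_notMem (by simp [hvv', hvw, hvw'ne]),
        Finset.card_insert_of_notMem (by simp [hv'w, hv'w']),
        Finset.card_insert_of_notMem (by simp [hww']), Finset.card_singleton]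
    have := Finset.card_le_card hsub
    rw [hc4, hdeg u] at this
    omega
  have hGconn : G.Connected := by
    have h := h3c.2 ∅ (by simp)
    rw [Set.compl_empty] at h
    exact G.induceUnivIso.connected_iff.mp h
  -- u and t are adjacent
  have hutadj : G.Adj u t := by
    by_contra hnut
    have hauv : G.Adj u v := havu.symm
    have hauv' : G.Adj u v' := hav'u.symm
    obtain ⟨x, hNu, hxv, hxv'⟩ := exists_third (G.neighborFinset u) (hdeg u) v v'
      ((G.mem_neighborFinset u v).mpr hauv) ((G.mem_neighborFinset u v').mpr hauv') hvv'
    have haux : G.Adj u x := by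
      rw [← mem_neighborFinset, hNu]; simp
    have hxw : x ≠ w := by
      rintro rfl
      rcases (hAw u).mp haux.symm with rfl | rfl | rfl
      · exact huv rfl
      · exact huv' rfl
      · exact hut rfl
    have hxw' : x ≠ w' := by
      rintro rfl
      rcases (hAw' u).mp haux.symm with rfl | rfl | rfl
      · exact huv rfl
      · exact huv' rfl
      · exact hut rfl
    have hxt : x ≠ t := fun h => hnut (h ▸ haux)
    have hK := h3c.2 {u, t} (by rw [Set.ncard_pair hut]; omega)
    have hxu : x ≠ u := (G.ne_of_adj haux).symm
    have hvC : v ∈ ({u, t}ᶜ : Set V) := by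
      simp only [Set.mem_compl_iff, Set.mem_insert_iff, Set.mem_singleton_iff]
      push_neg
      exact ⟨huv.symm, htv.symm⟩
    have hxC : x ∈ ({u, t}ᶜ : Set V) := by
      simp only [Set.mem_compl_iff, Set.mem_insert_iff, Set.mem_singleton_iff]
      push_neg
      exact ⟨hxu, hxt⟩
    obtain ⟨p⟩ := hK.preconnected ⟨v, hvC⟩ ⟨x, hxC⟩
    have hclosed : ∀ ⦃a b : ({u, t}ᶜ : Set V)⦄,
        a ∈ {z : ({u, t}ᶜ : Set V) | z.1 = v ∨ z.1 = v' ∨ z.1 = w ∨ z.1 = w'} →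
        (G.induce ({u, t}ᶜ : Set V)).Adj a b →
        b ∈ {z : ({u, t}ᶜ : Set V) | z.1 = v ∨ z.1 = v' ∨ z.1 = w ∨ z.1 = w'} := by
      rintro ⟨a, ha⟩ ⟨b, hb⟩ hmem hab
      have hab' : G.Adj a b := hab
      simp only [Set.mem_compl_iff, Set.mem_insert_iff, Set.mem_singleton_iff] at hb
      push_neg at hb
      simp only [Set.mem_setOf_eq] at hmem ⊢
      rcases hmem with h | h | h | h <;> subst h
      · rcases (hAv b).mp hab' with rfl | rfl | rfl
        · exact Or.inr (Or.inr (Or.inl rfl))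
        · exact Or.inr (Or.inr (Or.inr rfl))
        · exact absurd rfl hb.1
      · rcases (hAv' b).mp hab' with rfl | rfl | rfl
        · exact Or.inr (Or.inr (Or.inl rfl))
        · exact Or.inr (Or.inr (Or.inr rfl))
        · exact absurd rfl hb.1
      · rcases (hAw b).mp hab' with rfl | rfl | rfl
        · exact Or.inl rfl
        · exact Or.inr (Or.inl rfl)
        · exact absurd rfl hb.2
      · rcases (hAw' b).mp hab' with rfl | rfl | rfl
        · exact Or.inl rfl
        · exact Or.inr (Or.inl rfl)
        · exact absurd rfl hb.2
    have hx := closed_walk _ hclosed p (Or.inl rfl)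
    simp only [Set.mem_setOf_eq] at hx
    rcases hx with h | h | h | h
    exacts [hxv h, hxv' h, hxw h, hxw' h]
  -- full neighborhood of u and t
  have hNu : G.neighborFinset u = {v, v', t} := by
    refine (Finset.eq_of_subset_of_card_le ?_ ?_).symm
    · simp only [Finset.insert_subset_iff, Finset.singleton_subset_iff, mem_neighborFinset]
      exact ⟨havu.symm, hav'u.symm, hutadj⟩
    · rw [hdeg u, Finset.card_insert_of_notMem (by simp [hvv', htv.symm]),
        Finset.card_insert_of_notMem (by simp [htv'.symm]), Finset.card_singleton]
  have hNt : G.neighborFinset t = {w, w', u} := by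
    refine (Finset.eq_of_subset_of_card_le ?_ ?_).symm
    · simp only [Finset.insert_subset_iff, Finset.singleton_subset_iff, mem_neighborFinset]
      exact ⟨hawt.symm, haw't.symm, hutadj.symm⟩
    · rw [hdeg t, Finset.card_insert_of_notMem (by simp [hww', huw.symm]),
        Finset.card_insert_of_notMem (by simp [huw'.symm]), Finset.card_singleton]
  have hAu : ∀ z, G.Adj u z ↔ z = v ∨ z = v' ∨ z = t := by
    intro z; rw [← mem_neighborFinset, hNu]; simp
  have hAt : ∀ z, G.Adj t z ↔ z = w ∨ z = w' ∨ z = u := by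
    intro z; rw [← mem_neighborFinset, hNt]; simp
  -- every vertex is one of the six
  have hS : ∀ z : V, z = v ∨ z = v' ∨ z = t ∨ z = w ∨ z = w' ∨ z = u := by
    intro z
    obtain ⟨p⟩ := hGconn.preconnected v z
    refine closed_walk {z : V | z = v ∨ z = v' ∨ z = t ∨ z = w ∨ z = w' ∨ z = u} ?_ p
      (Or.inl rfl)
    rintro a b hmem hab
    simp only [Set.mem_setOf_eq] at hmem ⊢
    rcases hmem with rfl | rfl | rfl | rfl | rfl | rfl
    · rcases (hAv b).mp hab with rfl | rfl | rfl <;> tauto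
    · rcases (hAv' b).mp hab with rfl | rfl | rfl <;> tauto
    · rcases (hAt b).mp hab with rfl | rfl | rfl <;> tauto
    · rcases (hAw b).mp hab with rfl | rfl | rfl <;> tauto
    · rcases (hAw' b).mp hab with rfl | rfl | rfl <;> tauto
    · rcases (hAu b).mp hab with rfl | rfl | rfl <;> tauto
  -- negative adjacency facts
  have hn_vt : ¬ G.Adj v t := by rw [hAv]; push_neg; exact ⟨htw, htw', hut.symm⟩
  have hn_v't : ¬ G.Adj v' t := by rw [hAv']; push_neg; exact ⟨htw, htw', hut.symm⟩
  have hn_wu : ¬ G.Adj w u := by rw [hAw]; push_neg; exact ⟨huv, huv', hut⟩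
  have hn_w'u : ¬ G.Adj w' u := by rw [hAw']; push_neg; exact ⟨huv, huv', hut⟩
  -- the bijection
  set g : Fin 3 ⊕ Fin 3 → V := Sum.elim ![v, v', t] ![w, w', u] with hg
  have ginj : Function.Injective g := by
    rintro (a | a) (b | b) h <;> fin_cases a <;> fin_cases b <;>
      simp only [hg, Sum.elim_inl, Sum.elim_inr, Matrix.cons_val_zero, Matrix.cons_val_one,
        Matrix.head_cons, Matrix.cons_val_two, Matrix.tail_cons] at h <;>
      first
        | rfl
        | (exact absurd h (by assumption))
        | (exact absurd h.symm (by assumption))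
  have gsurj : Function.Surjective g := by
    intro z
    rcases hS z with rfl | rfl | rfl | rfl | rfl | rfl
    exacts [⟨Sum.inl 0, rfl⟩, ⟨Sum.inl 1, rfl⟩, ⟨Sum.inl 2, rfl⟩,
      ⟨Sum.inr 0, rfl⟩, ⟨Sum.inr 1, rfl⟩, ⟨Sum.inr 2, rfl⟩]
  have havw' : G.Adj v w' := hvw'adj
  have hav'w : G.Adj v' w := hv'wadj.symm
  have hav'w' : G.Adj v' w' := (adjw' v').mp hav'w.symm |>.symm
  have hatw : G.Adj t w := hawt.symm
  have hatw' : G.Adj t w' := haw't.symm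
  have hatu : G.Adj t u := hutadj.symm
  have hawv : G.Adj w v := hadj.symm
  have haw'v : G.Adj w' v := havw'.symm
  have hawv' : G.Adj w v' := hav'w.symm
  have haw'v' : G.Adj w' v' := hav'w'.symm
  have hauv : G.Adj u v := havu.symm
  have hauv' : G.Adj u v' := hav'u.symm
  have hawt2 : G.Adj w t := hawt
  have haw't2 : G.Adj w' t := haw't
  have hn_v'v : ¬ G.Adj v' v := fun h => hnadj1 h.symm
  have hn_tv : ¬ G.Adj t v := fun h => hn_vt h.symm
  have hn_tv' : ¬ G.Adj t v' := fun h => hn_v't h.symm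
  have hn_w'w : ¬ G.Adj w' w := fun h => hnadj2 h.symm
  have hn_uw : ¬ G.Adj u w := fun h => hn_wu h.symm
  have hn_uw' : ¬ G.Adj u w' := fun h => hn_w'u h.symm
  refine ⟨(RelIso.mk (Equiv.ofBijective g ⟨ginj, gsurj⟩) ?_).symm⟩
  rintro (a | a) (b | b) <;> fin_cases a <;> fin_cases b <;>
    simp [hg, completeBipartiteGraph, Equiv.ofBijective, hadj, havw', havu, hav'w, hav'w',
      hav'u, hatw, hatw', hatu, hnadj1, hnadj2, hn_vt, hn_v't, hn_wu, hn_w'u,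
      hawv, haw'v, hawv', haw'v', hauv, hauv', hawt2, haw't2, hutadj,
      hn_v'v, hn_tv, hn_tv', hn_w'w, hn_uw, hn_uw']
end
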